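/- The cardinality of the abacus hook monoid ℌ_{d,n} equals d^{n+1} · Σ_{k=1}^{n} χ_k^{(n)} d^{-k} (1+d)^k, equivalently d · Σ_{k=1}^{n} χ_k^{(n)} d^{n-k} (1+d)^k. -/

import Mathlib

open Finset

/-- `l` encodes a (non-degenerate) indexing matrix on `n` points: the columns,
listed left to right, as pairs `(top entry, bottom entry)`.  Entries lie in
`[0, n-1]`, the first row is strictly increasing, the second row is weakly
increasing, repeated second-row entries are `0`, and each top entry is at
least the corresponding bottom entry. -/
def IsIndexingMatrix (n : ℕ) (l : List (ℕ × ℕ)) : Prop :=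
  1 ≤ l.length ∧ l.length ≤ n ∧
  (∀ p ∈ l, p.1 < n ∧ p.2 ≤ p.1) ∧
  l.Pairwise (fun p q => p.1 < q.1 ∧ p.2 ≤ q.2 ∧ (p.2 = q.2 → p.2 = 0))

/-- A positive indexing matrix: all entries are positive. -/
def IsPositiveIndexingMatrix (n : ℕ) (l : List (ℕ × ℕ)) : Prop :=
  IsIndexingMatrix n l ∧ ∀ p ∈ l, 0 < p.1 ∧ 0 < p.2

/-- `θ_k^{(n)}`: the number of positive indexing matrices whose `(1,1)` entry
equals `k`. -/
noncomputable def theta (n k : ℕ) : ℕ :=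
  Nat.card {l : List (ℕ × ℕ) //
    IsPositiveIndexingMatrix n l ∧ l.head?.map Prod.fst = some k}

/-- The blob-rank of an indexing matrix: the number of its columns containing
a `0`. -/
def blobRank (l : List (ℕ × ℕ)) : ℕ := l.countP (fun p => p.1 == 0 || p.2 == 0)

/-- `Ω_r^{(n)}`: the number of indexing matrices on `n` points of blob-rank `r`,
the degenerate indexing matrix being counted in `Ω_0^{(n)}`. -/
noncomputable def Omega (n r : ℕ) : ℕ :=
  Nat.card {l : List (ℕ × ℕ) // IsIndexingMatrix n l ∧ blobRank l = r} +
    (if r = 0 then 1 else 0)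

/-- `χ_k^{(n)} = Σ_{i₁+⋯+i_k = n-k} C_{i₁} ⋯ C_{i_k}` (Catalan numbers). -/
def chi (n k : ℕ) : ℕ :=
  ∑ t ∈ Finset.Nat.antidiagonalTuple k (n - k), ∏ j, catalan (t j)

/-- A Temperley–Lieb diagram on `n` points: a non-crossing perfect matching of
`2n` boundary points numbered clockwise, given by a fixed-point free
involution. -/
structure TLDiagram (n : ℕ) where
  f : Fin (2 * n) → Fin (2 * n)
  involutive : ∀ x, f (f x) = x
  noFixedPoint : ∀ x, f x ≠ x
  noncrossing : ∀ a b : Fin (2 * n), a < b → b < f a → f a < f b → False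

/-- `a` is the left (smaller) endpoint of an arc of `D`. -/
def TLDiagram.IsArc {n : ℕ} (D : TLDiagram n) (a : Fin (2 * n)) : Prop :=
  a < D.f a

/-- The arc with left endpoint `a` is exposed to the left side of the diagram,
i.e. it is not nested inside any other arc. -/
def TLDiagram.IsExposed {n : ℕ} (D : TLDiagram n) (a : Fin (2 * n)) : Prop :=
  a < D.f a ∧ ∀ c, ¬ (c < a ∧ D.f a < D.f c)

/-- The number of arcs of `D` exposed to the left side. -/
noncomputable def exposedCount {n : ℕ} (D : TLDiagram n) : ℕ :=
  Nat.card {a : Fin (2 * n) // D.IsExposed a}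

/-- A `d`-abacus blob diagram on `n` points: a TL-diagram together with blobs
on some arcs exposed to the left, one bead count in `ℤ/dℤ` on every arc, and
an extra bead count on every blobbed arc (its second component). -/
structure AbacusBlobDiagram (d n : ℕ) where
  base : TLDiagram n
  blob : Fin (2 * n) → Bool
  blob_exposed : ∀ a, blob a = true → base.IsExposed a
  beads₁ : Fin (2 * n) → ZMod d
  beads₂ : Fin (2 * n) → ZMod d
  beads₁_arc : ∀ a, ¬ base.IsArc a → beads₁ a = 0
  beads₂_blob : ∀ a, blob a = false → beads₂ a = 0

/-- A `d`-abacus hook diagram on `n` points: a blobbed TL-diagram in which all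
blobbed arcs are merged into the single hook component through `0, 0'`, with a
bead count in `ℤ/dℤ` on every unblobbed arc and one on the hook component. -/
structure AbacusHookDiagram (d n : ℕ) where
  base : TLDiagram n
  blob : Fin (2 * n) → Bool
  blob_exposed : ∀ a, blob a = true → base.IsExposed a
  beads : Fin (2 * n) → ZMod d
  beads_arc : ∀ a, ¬ base.IsArc a ∨ blob a = true → beads a = 0
  hookBeads : ZMod d

namespace TLDiagram
variable {n : ℕ} (D : TLDiagram n)

theorem ext' {D₁ D₂ : TLDiagram n} (h : D₁.f = D₂.f) : D₁ = D₂ := by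
  cases D₁; cases D₂; cases h; rfl

theorem f_inj : Function.Injective D.f :=
  Function.Involutive.injective D.involutive

instance : Finite (TLDiagram n) :=
  Finite.of_injective (fun D => D.f) fun _ _ h => ext' h

noncomputable def arcsF : Finset (Fin (2*n)) :=
  @Finset.filter _ D.IsArc (Classical.decPred _) univ

theorem mem_arcsF {a : Fin (2*n)} : a ∈ D.arcsF ↔ D.IsArc a := by
  rw [arcsF, @Finset.mem_filter _ _ (Classical.decPred _)]; simp

noncomputable def expF : Finset (Fin (2*n)) :=
  @Finset.filter _ D.IsExposed (Classical.decPred _) univ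

theorem mem_expF {a : Fin (2*n)} : a ∈ D.expF ↔ D.IsExposed a := by
  rw [expF, @Finset.mem_filter _ _ (Classical.decPred _)]; simp

theorem pair_partition (s : Finset (Fin (2*n))) (hs : ∀ x ∈ s, D.f x ∈ s) :
    ∃ t ⊆ s, (∀ x, x ∈ t ↔ x ∈ s ∧ x < D.f x) ∧ s.card = 2 * t.card := by
  classical
  set A := s.filter (fun a => a < D.f a) with hA
  set B := s.filter (fun a => D.f a < a) with hB
  refine ⟨A, Finset.filter_subset _ _, fun x => Finset.mem_filter, ?_⟩
  have hsplit : s = A ∪ B := by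
    ext a
    simp only [hA, hB, mem_filter, mem_union]
    constructor
    · intro hpa
      rcases lt_or_gt_of_ne (D.noFixedPoint a).symm with h | h
      · exact Or.inl ⟨hpa, h⟩
      · exact Or.inr ⟨hpa, h⟩
    · rintro (⟨h, _⟩ | ⟨h, _⟩) <;> exact h
  have hdisj : Disjoint A B := by
    rw [Finset.disjoint_left]
    intro a ha hb
    simp only [hA, hB, mem_filter] at ha hb
    exact absurd (ha.2.trans hb.2) (lt_irrefl a)
  have hcard : A.card = B.card := by
    apply Finset.card_bij (fun a _ => D.f a)
    · intro a ha
      simp only [hA, hB, mem_filter] at ha ⊢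
      refine ⟨hs a ha.1, ?_⟩
      rw [D.involutive a]; exact ha.2
    · intro a _ b _ h
      exact D.f_inj h
    · intro b hb
      simp only [hA, hB, mem_filter] at hb ⊢
      exact ⟨D.f b, ⟨hs b hb.1, by rw [D.involutive b]; exact hb.2⟩, D.involutive b⟩
  conv_lhs => rw [hsplit]
  rw [Finset.card_union_of_disjoint hdisj, ← hcard]; omega

theorem card_arcsF : D.arcsF.card = n := by
  obtain ⟨t, _, ht, hc⟩ := D.pair_partition univ (fun x _ => mem_univ _)
  have : t = D.arcsF := by
    ext a; rw [ht, mem_arcsF]; simp [IsArc]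
  rw [this, Finset.card_univ, Fintype.card_fin] at hc
  omega

theorem expF_subset_arcsF : D.expF ⊆ D.arcsF := by
  intro a ha
  rw [mem_expF] at ha
  rw [mem_arcsF]
  exact ha.1

theorem exposedCount_eq : exposedCount D = D.expF.card := by
  classical
  rw [exposedCount, Nat.card_eq_fintype_card, Fintype.card_subtype]
  apply Finset.card_bij (fun a _ => a) <;> simp [mem_expF]

theorem exposedCount_le : exposedCount D ≤ n := by
  rw [D.exposedCount_eq]
  exact le_trans (Finset.card_le_card D.expF_subset_arcsF) (le_of_eq D.card_arcsF)

theorem zero_isExposed (hn : 1 ≤ n) : D.IsExposed ⟨0, by omega⟩ := by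
  have h0 : (⟨0, by omega⟩ : Fin (2*n)).val = 0 := rfl
  constructor
  · rw [Fin.lt_def, h0]
    rcases Nat.eq_zero_or_pos (D.f ⟨0, by omega⟩).val with h | h
    · exact absurd (Fin.ext (h.trans h0.symm)) (D.noFixedPoint ⟨0, by omega⟩)
    · exact h
  · rintro c ⟨hc, -⟩
    rw [Fin.lt_def, h0] at hc
    omega

theorem one_le_exposedCount (hn : 1 ≤ n) : 1 ≤ exposedCount D := by
  rw [D.exposedCount_eq, Finset.one_le_card]
  exact ⟨⟨0, by omega⟩, D.mem_expF.mpr (D.zero_isExposed hn)⟩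

section Glue
variable {n m : ℕ}

private lemma bnd1 (hmn : m ≤ n) (z : Fin (2*m)) : z.val + 1 < 2*(n+1) := by
  have := z.isLt; omega

private lemma bnd2 (hmn : m ≤ n) (z : Fin (2*(n-m))) : z.val + (2*m+2) < 2*(n+1) := by
  have := z.isLt; omega

def glueF (hmn : m ≤ n) (D₁ : TLDiagram m) (D₂ : TLDiagram (n - m))
    (x : Fin (2*(n+1))) : Fin (2*(n+1)) :=
  if h1 : x.val = 0 then ⟨2*m+1, by omega⟩
  else if h2 : x.val < 2*m+1 then
    ⟨(D₁.f ⟨x.val - 1, by omega⟩).val + 1, bnd1 hmn _⟩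
  else if h3 : x.val = 2*m+1 then ⟨0, by omega⟩
  else
    ⟨(D₂.f ⟨x.val - (2*m+2), by have := x.isLt; omega⟩).val + (2*m+2), bnd2 hmn _⟩

variable (hmn : m ≤ n) (D₁ : TLDiagram m) (D₂ : TLDiagram (n - m))

theorem glueF_zero (x : Fin (2*(n+1))) (hx : x.val = 0) :
    (glueF hmn D₁ D₂ x).val = 2*m+1 := by
  simp only [glueF, dif_pos hx]

theorem glueF_mid (x : Fin (2*(n+1))) (hx : x.val = 2*m+1) :
    (glueF hmn D₁ D₂ x).val = 0 := by
  simp only [glueF]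
  rw [dif_neg (by omega), dif_neg (by omega), dif_pos hx]

theorem glueF_inner (x : Fin (2*(n+1))) (y : Fin (2*m)) (hx : x.val = y.val + 1) :
    (glueF hmn D₁ D₂ x).val = (D₁.f y).val + 1 := by
  have hy := y.isLt
  simp only [glueF]
  rw [dif_neg (by omega), dif_pos (by omega)]
  have hgen : ∀ (z : Fin (2*m)), z = y → ((⟨(D₁.f z).val + 1, bnd1 hmn _⟩ : Fin (2*(n+1)))).val = (D₁.f y).val + 1 := by
    rintro z rfl; rfl
  apply hgen
  exact Fin.ext (show x.val - 1 = y.val by omega)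

theorem glueF_outer (x : Fin (2*(n+1))) (y : Fin (2*(n-m))) (hx : x.val = y.val + (2*m+2)) :
    (glueF hmn D₁ D₂ x).val = (D₂.f y).val + (2*m+2) := by
  have hy := y.isLt
  simp only [glueF]
  rw [dif_neg (by omega), dif_neg (by omega), dif_neg (by omega)]
  have hgen : ∀ (z : Fin (2*(n-m))), z = y → ((⟨(D₂.f z).val + (2*m+2), bnd2 hmn _⟩ : Fin (2*(n+1)))).val = (D₂.f y).val + (2*m+2) := by
    rintro z rfl; rfl
  apply hgen
  exact Fin.ext (show x.val - (2*m+2) = y.val by omega)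

theorem region_cases (hmn : m ≤ n) (x : Fin (2*(n+1))) :
    x.val = 0 ∨ x.val = 2*m+1 ∨ (∃ y : Fin (2*m), x.val = y.val+1) ∨
      ∃ y : Fin (2*(n-m)), x.val = y.val + (2*m+2) := by
  have hx := x.isLt
  rcases Nat.lt_or_ge x.val 1 with h | h
  · exact Or.inl (by omega)
  rcases Nat.lt_or_ge x.val (2*m+1) with h2 | h2
  · exact Or.inr (Or.inr (Or.inl ⟨⟨x.val - 1, by omega⟩, by show x.val = x.val - 1 + 1; omega⟩))
  rcases Nat.eq_or_lt_of_le h2 with h3 | h3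
  · exact Or.inr (Or.inl h3.symm)
  · exact Or.inr (Or.inr (Or.inr ⟨⟨x.val - (2*m+2), by omega⟩,
      by show x.val = x.val - (2*m+2) + (2*m+2); omega⟩))

def glue : TLDiagram (n+1) where
  f := glueF hmn D₁ D₂
  involutive := by
    intro x
    apply Fin.ext
    rcases region_cases hmn x with hx | hx | ⟨y, hx⟩ | ⟨y, hx⟩
    · rw [glueF_mid hmn D₁ D₂ _ (glueF_zero hmn D₁ D₂ x hx), hx]
    · rw [glueF_zero hmn D₁ D₂ _ (glueF_mid hmn D₁ D₂ x hx), hx]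
    · have h1 := glueF_inner hmn D₁ D₂ x y hx
      rw [glueF_inner hmn D₁ D₂ _ (D₁.f y) h1, D₁.involutive y, hx]
    · have h1 := glueF_outer hmn D₁ D₂ x y hx
      rw [glueF_outer hmn D₁ D₂ _ (D₂.f y) h1, D₂.involutive y, hx]
  noFixedPoint := by
    intro x hfx
    have hv : (glueF hmn D₁ D₂ x).val = x.val := congrArg Fin.val hfx
    rcases region_cases hmn x with hx | hx | ⟨y, hx⟩ | ⟨y, hx⟩
    · rw [glueF_zero hmn D₁ D₂ x hx, hx] at hv; omega
    · rw [glueF_mid hmn D₁ D₂ x hx, hx] at hv; omega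
    · rw [glueF_inner hmn D₁ D₂ x y hx, hx] at hv
      exact D₁.noFixedPoint y (Fin.ext (by omega))
    · rw [glueF_outer hmn D₁ D₂ x y hx, hx] at hv
      exact D₂.noFixedPoint y (Fin.ext (by omega))
  noncrossing := by
    intro a b hab hbfa hfab
    rw [Fin.lt_def] at hab hbfa hfab
    rcases region_cases hmn a with ha | ha | ⟨y, ha⟩ | ⟨y, ha⟩
    · rw [glueF_zero hmn D₁ D₂ a ha] at hbfa hfab
      rcases region_cases hmn b with hb | hb | ⟨z, hb⟩ | ⟨z, hb⟩
      · omega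
      · omega
      · rw [glueF_inner hmn D₁ D₂ b z hb] at hfab
        have := (D₁.f z).isLt; omega
      · omega
    · rw [glueF_mid hmn D₁ D₂ a ha] at hbfa
      omega
    · rw [glueF_inner hmn D₁ D₂ a y ha] at hbfa hfab
      have hfy := (D₁.f y).isLt
      rcases region_cases hmn b with hb | hb | ⟨z, hb⟩ | ⟨z, hb⟩
      · omega
      · omega
      · rw [glueF_inner hmn D₁ D₂ b z hb] at hfab
        exact D₁.noncrossing y z (by rw [Fin.lt_def]; omega) (by rw [Fin.lt_def]; omega)
          (by rw [Fin.lt_def]; omega)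
      · omega
    · rw [glueF_outer hmn D₁ D₂ a y ha] at hbfa hfab
      have hfy := (D₂.f y).isLt
      rcases region_cases hmn b with hb | hb | ⟨z, hb⟩ | ⟨z, hb⟩
      · omega
      · omega
      · have := z.isLt; omega
      · rw [glueF_outer hmn D₁ D₂ b z hb] at hfab
        exact D₂.noncrossing y z (by rw [Fin.lt_def]; omega) (by rw [Fin.lt_def]; omega)
          (by rw [Fin.lt_def]; omega)

end Glue

section Restrict
variable {N : ℕ}

def emb (c M : ℕ) (hcM : c + 2*M ≤ 2*N) (y : Fin (2*M)) : Fin (2*N) :=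
  ⟨c + y.val, by have := y.isLt; omega⟩

variable (D : TLDiagram N) (c M : ℕ) (hcM : c + 2*M ≤ 2*N)
  (hclosed : ∀ x : Fin (2*N), c ≤ x.val → x.val < c + 2*M →
    c ≤ (D.f x).val ∧ (D.f x).val < c + 2*M)
include hclosed

theorem emb_bounds (y : Fin (2*M)) :
    c ≤ (D.f (emb c M hcM y)).val ∧ (D.f (emb c M hcM y)).val < c + 2*M :=
  hclosed _ (Nat.le_add_right _ _) (by have := y.isLt; show c + y.val < c + 2*M; omega)

def restrictF (y : Fin (2*M)) : Fin (2*M) :=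
  ⟨(D.f (emb c M hcM y)).val - c, by
    have h := emb_bounds D c M hcM hclosed y; omega⟩

theorem restrictF_val (y : Fin (2*M)) :
    (restrictF D c M hcM hclosed y).val = (D.f (emb c M hcM y)).val - c := rfl

theorem emb_restrictF (y : Fin (2*M)) :
    emb c M hcM (restrictF D c M hcM hclosed y) = D.f (emb c M hcM y) := by
  have h := emb_bounds D c M hcM hclosed y
  apply Fin.ext
  show c + ((D.f (emb c M hcM y)).val - c) = _
  omega

def restrict : TLDiagram M where
  f := restrictF D c M hcM hclosed
  involutive := by
    intro y
    apply Fin.ext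
    rw [restrictF_val, emb_restrictF, D.involutive]
    show (emb c M hcM y).val - c = y.val
    show c + y.val - c = y.val
    omega
  noFixedPoint := by
    intro y hy
    have h := emb_bounds D c M hcM hclosed y
    have hv : (D.f (emb c M hcM y)).val - c = y.val := congrArg Fin.val hy
    have : D.f (emb c M hcM y) = emb c M hcM y := by
      apply Fin.ext
      show _ = c + y.val
      omega
    exact D.noFixedPoint _ this
  noncrossing := by
    intro a b hab hbfa hfab
    rw [Fin.lt_def] at hab hbfa hfab
    rw [restrictF_val] at hbfa hfab
    rw [restrictF_val] at hfab
    have ha := emb_bounds D c M hcM hclosed a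
    have hb := emb_bounds D c M hcM hclosed b
    exact D.noncrossing (emb c M hcM a) (emb c M hcM b)
      (by rw [Fin.lt_def]; show c + a.val < c + b.val; omega)
      (by rw [Fin.lt_def]; show c + b.val < _; omega)
      (by rw [Fin.lt_def]; omega)

theorem restrict_f_val (y : Fin (2*M)) :
    ((restrict D c M hcM hclosed).f y).val = (D.f (emb c M hcM y)).val - c := rfl

end Restrict

section Unglue
variable {n : ℕ} (D : TLDiagram (n+1)) (j : ℕ)
  (hj : ∀ x : Fin (2*(n+1)), x.val = 0 → (D.f x).val = j)
include hj

theorem inner_mem : ∀ x : Fin (2*(n+1)), 0 < x.val → x.val < j →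
    0 < (D.f x).val ∧ (D.f x).val < j := by
  intro x hx1 hx2
  have hz0 : (D.f x).val ≠ 0 := by
    intro h0
    have h := hj (D.f x) h0
    rw [D.involutive x] at h
    omega
  have h0 := hj ⟨0, by omega⟩ rfl
  have hzj : (D.f x).val ≠ j := by
    intro hzj
    have : D.f x = D.f ⟨0, by omega⟩ := Fin.ext (by omega)
    have := D.f_inj this
    have := congrArg Fin.val this
    change x.val = 0 at this
    omega
  rcases Nat.lt_or_ge (D.f x).val j with h | h
  · exact ⟨by omega, h⟩
  · exfalso
    refine D.noncrossing ⟨0, by omega⟩ x ?_ ?_ ?_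
    · rw [Fin.lt_def]; exact hx1
    · rw [Fin.lt_def, h0]; exact hx2
    · rw [Fin.lt_def, h0]; omega

theorem outer_mem : ∀ x : Fin (2*(n+1)), j < x.val → j < (D.f x).val := by
  intro x hx
  have hz0 : (D.f x).val ≠ 0 := by
    intro h0
    have h := hj (D.f x) h0
    rw [D.involutive x] at h
    omega
  have h0 := hj ⟨0, by omega⟩ rfl
  have hzj : (D.f x).val ≠ j := by
    intro hzj
    have : D.f x = D.f ⟨0, by omega⟩ := Fin.ext (by omega)
    have := D.f_inj this
    have := congrArg Fin.val this
    change x.val = 0 at this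
    omega
  rcases Nat.lt_or_ge j (D.f x).val with h | h
  · exact h
  · exfalso
    have := inner_mem D j hj (D.f x) (by omega) (by omega)
    rw [D.involutive x] at this
    omega

end Unglue

section Unglue2
variable {n m : ℕ}

theorem closure₁ (D : TLDiagram (n+1))
    (hj : ∀ x : Fin (2*(n+1)), x.val = 0 → (D.f x).val = 2*m+1) : ∀ x : Fin (2*(n+1)), 1 ≤ x.val → x.val < 1 + 2*m →
    1 ≤ (D.f x).val ∧ (D.f x).val < 1 + 2*m := by
  intro x h1 h2
  have := inner_mem D (2*m+1) hj x (by omega) (by omega)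
  omega

theorem closure₂ (D : TLDiagram (n+1))
    (hj : ∀ x : Fin (2*(n+1)), x.val = 0 → (D.f x).val = 2*m+1) : ∀ x : Fin (2*(n+1)), 2*m+2 ≤ x.val → x.val < 2*m+2 + 2*(n-m) →
    2*m+2 ≤ (D.f x).val ∧ (D.f x).val < 2*m+2 + 2*(n-m) := by
  intro x h1 _
  have h := outer_mem D (2*m+1) hj x (by omega)
  have := (D.f x).isLt
  omega

def unglue₁ (D : TLDiagram (n+1)) (hmn : m ≤ n)
    (hj : ∀ x : Fin (2*(n+1)), x.val = 0 → (D.f x).val = 2*m+1) : TLDiagram m :=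
  restrict D 1 m (by omega) (closure₁ D hj)

def unglue₂ (D : TLDiagram (n+1)) (hmn : m ≤ n)
    (hj : ∀ x : Fin (2*(n+1)), x.val = 0 → (D.f x).val = 2*m+1) : TLDiagram (n - m) :=
  restrict D (2*m+2) (n-m) (by omega) (closure₂ D hj)

theorem glue_unglue (D : TLDiagram (n+1)) (hmn : m ≤ n)
    (hj : ∀ x : Fin (2*(n+1)), x.val = 0 → (D.f x).val = 2*m+1) :
    glue hmn (unglue₁ D hmn hj) (unglue₂ D hmn hj) = D := by
  apply ext'
  funext x
  apply Fin.ext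
  show (glueF hmn _ _ x).val = _
  rcases region_cases hmn x with hx | hx | ⟨y, hx⟩ | ⟨y, hx⟩
  · rw [glueF_zero hmn _ _ x hx, hj x hx]
  · rw [glueF_mid hmn _ _ x hx]
    have h0 := hj ⟨0, by omega⟩ rfl
    have hx0 : x = D.f ⟨0, by omega⟩ := Fin.ext (by omega)
    rw [hx0, D.involutive]
  · rw [glueF_inner hmn _ _ x y hx]
    show ((unglue₁ D hmn hj).f y).val + 1 = _
    rw [unglue₁, restrict_f_val]
    have hcl := closure₁ D hj (emb 1 m (by omega) y) (by show 1 ≤ 1 + y.val; omega)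
      (by have := y.isLt; show 1 + y.val < 1 + 2*m; omega)
    have hemb : emb 1 m (by omega : 1 + 2*m ≤ 2*(n+1)) y = x :=
      Fin.ext (by show 1 + y.val = x.val; omega)
    rw [hemb] at hcl ⊢
    omega
  · rw [glueF_outer hmn _ _ x y hx]
    show ((unglue₂ D hmn hj).f y).val + (2*m+2) = _
    rw [unglue₂, restrict_f_val]
    have hcl := closure₂ D hj (emb (2*m+2) (n-m) (by omega) y)
      (by show 2*m+2 ≤ 2*m+2 + y.val; omega)
      (by have := y.isLt; show 2*m+2 + y.val < 2*m+2 + 2*(n-m); omega)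
    have hemb : emb (2*m+2) (n-m) (by omega : 2*m+2 + 2*(n-m) ≤ 2*(n+1)) y = x :=
      Fin.ext (by show 2*m+2 + y.val = x.val; omega)
    rw [hemb] at hcl ⊢
    omega

end Unglue2

section Exposed
variable {n m : ℕ} (hmn : m ≤ n) (D₁ : TLDiagram m) (D₂ : TLDiagram (n - m))

theorem glue_f : (glue hmn D₁ D₂).f = glueF hmn D₁ D₂ := rfl

theorem glue_exposed_iff (a : Fin (2*(n+1))) :
    (glue hmn D₁ D₂).IsExposed a ↔
      a.val = 0 ∨ ∃ y : Fin (2*(n-m)), a.val = y.val + (2*m+2) ∧ D₂.IsExposed y := by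
  constructor
  · rintro ⟨h1, h2⟩
    rw [Fin.lt_def, glue_f] at h1
    rcases region_cases hmn a with ha | ha | ⟨y, ha⟩ | ⟨y, ha⟩
    · exact Or.inl ha
    · rw [glueF_mid hmn D₁ D₂ a ha] at h1; omega
    · exfalso
      apply h2 ⟨0, by omega⟩
      constructor
      · rw [Fin.lt_def]; show 0 < a.val; omega
      · rw [Fin.lt_def, glue_f, glueF_zero hmn D₁ D₂ ⟨0, by omega⟩ rfl, glueF_inner hmn D₁ D₂ a y ha]
        have := (D₁.f y).isLt; omega
    · refine Or.inr ⟨y, ha, ?_, ?_⟩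
      · rw [Fin.lt_def]
        rw [glueF_outer hmn D₁ D₂ a y ha] at h1
        omega
      · rintro c ⟨hc1, hc2⟩
        rw [Fin.lt_def] at hc1 hc2
        apply h2 (emb (2*m+2) (n-m) (by omega) c)
        constructor
        · rw [Fin.lt_def]; show (2*m+2) + c.val < a.val; omega
        · rw [Fin.lt_def, glue_f, glueF_outer hmn D₁ D₂ a y ha,
            glueF_outer hmn D₁ D₂ _ c (by show (2*m+2) + c.val = c.val + (2*m+2); omega)]
          omega
  · rintro (ha | ⟨y, ha, hy1, hy2⟩)
    · constructor
      · rw [Fin.lt_def, glue_f, glueF_zero hmn D₁ D₂ a ha]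
        omega
      · rintro c ⟨hc, -⟩
        rw [Fin.lt_def] at hc
        omega
    · rw [Fin.lt_def] at hy1
      constructor
      · rw [Fin.lt_def, glue_f, glueF_outer hmn D₁ D₂ a y ha]
        omega
      · rintro c ⟨hc1, hc2⟩
        rw [Fin.lt_def] at hc1 hc2
        rw [glue_f, glueF_outer hmn D₁ D₂ a y ha] at hc2
        rcases region_cases hmn c with hcc | hcc | ⟨z, hcc⟩ | ⟨z, hcc⟩
        · rw [glueF_zero hmn D₁ D₂ c hcc] at hc2; omega
        · rw [glueF_mid hmn D₁ D₂ c hcc] at hc2; omega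
        · rw [glueF_inner hmn D₁ D₂ c z hcc] at hc2
          have := (D₁.f z).isLt; omega
        · rw [glueF_outer hmn D₁ D₂ c z hcc] at hc2
          exact hy2 z ⟨by rw [Fin.lt_def]; omega, by rw [Fin.lt_def]; omega⟩

theorem expF_glue : (glue hmn D₁ D₂).expF =
    insert ⟨0, by omega⟩ (D₂.expF.image (emb (2*m+2) (n-m) (by omega))) := by
  ext a
  rw [mem_expF, glue_exposed_iff, Finset.mem_insert]
  constructor
  · rintro (ha | ⟨y, ha, hy⟩)
    · exact Or.inl (Fin.ext ha)
    · refine Or.inr (Finset.mem_image.mpr ⟨y, D₂.mem_expF.mpr hy, ?_⟩)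
      apply Fin.ext
      show (2*m+2) + y.val = a.val
      omega
  · rintro (rfl | h)
    · exact Or.inl rfl
    · obtain ⟨y, hy, rfl⟩ := Finset.mem_image.mp h
      exact Or.inr ⟨y, by show (2*m+2) + y.val = y.val + (2*m+2); omega, D₂.mem_expF.mp hy⟩

theorem exposedCount_glue :
    exposedCount (glue hmn D₁ D₂) = exposedCount D₂ + 1 := by
  rw [exposedCount_eq, exposedCount_eq, expF_glue]
  rw [Finset.card_insert_of_notMem, Finset.card_image_of_injective]
  · intro y z hyz
    have := congrArg Fin.val hyz
    exact Fin.ext (by simpa [emb] using this)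
  · intro hmem
    obtain ⟨y, -, hy⟩ := Finset.mem_image.mp hmem
    have := congrArg Fin.val hy
    simp [emb] at this

end Exposed

section Counting

def emptyTL : TLDiagram 0 :=
  ⟨id, fun x => x.elim0, fun x => x.elim0, fun a => a.elim0⟩

instance : Unique (TLDiagram 0) :=
  ⟨⟨emptyTL⟩, fun D => ext' (funext fun x => x.elim0)⟩

theorem exposedCount_zero (D : TLDiagram 0) : exposedCount D = 0 := by
  rw [exposedCount_eq]
  rw [Finset.card_eq_zero]
  ext a
  exact absurd a.isLt (by omega)

variable {n : ℕ}

/-- The total glue map. -/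
def glueSig (x : Σ m : Fin (n+1), TLDiagram m.val × TLDiagram (n - m.val)) :
    TLDiagram (n+1) :=
  glue (Nat.lt_succ_iff.mp x.1.isLt) x.2.1 x.2.2

theorem glueSig_inj : Function.Injective (glueSig (n := n)) := by
  rintro ⟨⟨m₁, hm₁⟩, p₁, q₁⟩ ⟨⟨m₂, hm₂⟩, p₂, q₂⟩ h
  simp only [glueSig] at h
  have hval₁ : (⟨m₁, hm₁⟩ : Fin (n+1)).val = m₁ := rfl
  have hval₂ : (⟨m₂, hm₂⟩ : Fin (n+1)).val = m₂ := rfl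
  have hm : m₁ = m₂ := by
    have e1 : ((glue (Nat.lt_succ_iff.mp hm₁) p₁ q₁).f ⟨0, by omega⟩).val = 2*m₁+1 :=
      glueF_zero (Nat.lt_succ_iff.mp hm₁) p₁ q₁ ⟨0, by omega⟩ rfl
    have e2 : ((glue (Nat.lt_succ_iff.mp hm₂) p₂ q₂).f ⟨0, by omega⟩).val = 2*m₂+1 :=
      glueF_zero (Nat.lt_succ_iff.mp hm₂) p₂ q₂ ⟨0, by omega⟩ rfl
    have h0 := congrArg (fun (E : TLDiagram (n+1)) => (E.f ⟨0, by omega⟩).val) h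
    rw [e1, e2] at h0
    omega
  subst hm
  have hp : p₁ = p₂ := by
    apply ext'
    funext y
    apply Fin.ext
    have hb : y.val + 1 < 2*(n+1) := by
      have := y.isLt; have hv := hval₁; omega
    have e1 : ((glue (Nat.lt_succ_iff.mp hm₁) p₁ q₁).f ⟨y.val+1, hb⟩).val = (p₁.f y).val + 1 :=
      glueF_inner (Nat.lt_succ_iff.mp hm₁) p₁ q₁ ⟨y.val+1, hb⟩ y rfl
    have e2 : ((glue (Nat.lt_succ_iff.mp hm₂) p₂ q₂).f ⟨y.val+1, hb⟩).val = (p₂.f y).val + 1 :=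
      glueF_inner (Nat.lt_succ_iff.mp hm₂) p₂ q₂ ⟨y.val+1, hb⟩ y rfl
    have h0 := congrArg (fun (E : TLDiagram (n+1)) => (E.f ⟨y.val+1, hb⟩).val) h
    rw [e1, e2] at h0
    omega
  have hq : q₁ = q₂ := by
    apply ext'
    funext y
    apply Fin.ext
    have hb : y.val + (2*m₁+2) < 2*(n+1) := by
      have := y.isLt; have hv := hval₁; omega
    have e1 : ((glue (Nat.lt_succ_iff.mp hm₁) p₁ q₁).f ⟨y.val+(2*m₁+2), hb⟩).val
        = (q₁.f y).val + (2*m₁+2) :=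
      glueF_outer (Nat.lt_succ_iff.mp hm₁) p₁ q₁ ⟨y.val+(2*m₁+2), hb⟩ y rfl
    have e2 : ((glue (Nat.lt_succ_iff.mp hm₂) p₂ q₂).f ⟨y.val+(2*m₁+2), hb⟩).val
        = (q₂.f y).val + (2*m₁+2) :=
      glueF_outer (Nat.lt_succ_iff.mp hm₂) p₂ q₂ ⟨y.val+(2*m₁+2), hb⟩ y rfl
    have h0 := congrArg (fun (E : TLDiagram (n+1)) => (E.f ⟨y.val+(2*m₁+2), hb⟩).val) h
    rw [e1, e2] at h0
    omega
  rw [hp, hq]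

theorem glueSig_surj : Function.Surjective (glueSig (n := n)) := by
  intro D
  have hjpos : 0 < (D.f ⟨0, by omega⟩).val := by
    rcases Nat.eq_zero_or_pos (D.f ⟨0, by omega⟩).val with h | h
    · exact absurd (Fin.ext (h.trans rfl)) (D.noFixedPoint ⟨0, by omega⟩)
    · exact h
  set j := (D.f ⟨0, by omega⟩).val with hjdef
  have hj : ∀ x : Fin (2*(n+1)), x.val = 0 → (D.f x).val = j := by
    intro x hx
    rw [show x = ⟨0, by omega⟩ from Fin.ext hx]
  have hjlt : j < 2*(n+1) := (D.f ⟨0, by omega⟩).isLt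
  -- parity of the inner region
  obtain ⟨t, -, -, hcard⟩ := D.pair_partition
    (univ.filter (fun x : Fin (2*(n+1)) => 0 < x.val ∧ x.val < j))
    (by
      intro x hx
      rw [Finset.mem_filter] at hx ⊢
      exact ⟨Finset.mem_univ _, inner_mem D j hj x hx.2.1 hx.2.2⟩)
  have hscard : (univ.filter (fun x : Fin (2*(n+1)) => 0 < x.val ∧ x.val < j)).card
      = (Finset.Ioo 0 j).card := by
    apply Finset.card_bij (fun x _ => x.val)
    · intro x hx
      rw [Finset.mem_filter] at hx
      rw [Finset.mem_Ioo]
      exact hx.2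
    · intro x _ y _ hxy
      exact Fin.ext hxy
    · intro a ha
      rw [Finset.mem_Ioo] at ha
      exact ⟨⟨a, by omega⟩, Finset.mem_filter.mpr ⟨Finset.mem_univ _, ha⟩, rfl⟩
  rw [hscard, Nat.card_Ioo] at hcard
  have hm : j = 2 * t.card + 1 := by omega
  have hmn : t.card ≤ n := by omega
  have hj' : ∀ x : Fin (2*(n+1)), x.val = 0 → (D.f x).val = 2*t.card+1 := by
    intro x hx; rw [hj x hx, hm]
  exact ⟨⟨⟨t.card, by omega⟩, unglue₁ D hmn hj', unglue₂ D hmn hj'⟩,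
    glue_unglue D hmn hj'⟩

theorem nat_card_sigma {k : ℕ} (β : Fin k → Type*) [∀ i, Finite (β i)] :
    Nat.card (Σ i, β i) = ∑ i, Nat.card (β i) := by
  letI : ∀ i, Fintype (β i) := fun i => Fintype.ofFinite _
  rw [Nat.card_eq_fintype_card, Fintype.card_sigma]
  exact Finset.sum_congr rfl fun i _ => (Nat.card_eq_fintype_card).symm

theorem card_TL_succ :
    Nat.card (TLDiagram (n+1)) =
      ∑ i : Fin (n+1), Nat.card (TLDiagram i.val) * Nat.card (TLDiagram (n - i.val)) := by
  rw [← Nat.card_eq_of_bijective glueSig ⟨glueSig_inj, glueSig_surj⟩,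
    nat_card_sigma]
  exact Finset.sum_congr rfl fun i _ => Nat.card_prod _ _

theorem card_TL : ∀ n, Nat.card (TLDiagram n) = catalan n := by
  intro n
  induction n using Nat.strong_induction_on with
  | _ n ih =>
    match n with
    | 0 => rw [Nat.card_unique, catalan_zero]
    | (n+1) =>
      rw [card_TL_succ, catalan_succ]
      apply Finset.sum_congr rfl
      intro i _
      rw [ih i.val (by omega), ih (n - i.val) (by omega)]

end Counting
end TLDiagram

theorem sum_adT_succ {M : Type*} [AddCommMonoid M] (k N : ℕ) (F : (Fin (k+1) → ℕ) → M) :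
    ∑ t ∈ Finset.Nat.antidiagonalTuple (k+1) N, F t
      = ∑ p ∈ Finset.HasAntidiagonal.antidiagonal N,
          ∑ s ∈ Finset.Nat.antidiagonalTuple k p.2, F (Fin.cons p.1 s) := by
  rw [Finset.sum_sigma' (Finset.HasAntidiagonal.antidiagonal N)
    (fun p => Finset.Nat.antidiagonalTuple k p.2) (fun p s => F (Fin.cons p.1 s))]
  apply Finset.sum_nbij' (i := fun (t : Fin (k+1) → ℕ) =>
      (⟨(t 0, ∑ i : Fin k, t i.succ), Fin.tail t⟩ : Σ _ : ℕ × ℕ, (Fin k → ℕ)))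
    (j := fun x => Fin.cons x.1.1 x.2)
  · intro t ht
    rw [Finset.Nat.mem_antidiagonalTuple] at ht
    rw [Finset.mem_sigma, Finset.HasAntidiagonal.mem_antidiagonal, Finset.Nat.mem_antidiagonalTuple]
    constructor
    · rw [← ht, Fin.sum_univ_succ]
    · rfl
  · intro x hx
    rw [Finset.mem_sigma, Finset.HasAntidiagonal.mem_antidiagonal, Finset.Nat.mem_antidiagonalTuple] at hx
    rw [Finset.Nat.mem_antidiagonalTuple, Fin.sum_univ_succ]
    simp only [Fin.cons_zero, Fin.cons_succ]
    rw [hx.2, hx.1]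
  · intro t _
    exact Fin.cons_self_tail t
  · rintro ⟨⟨a, b⟩, s⟩ hx
    rw [Finset.mem_sigma, Finset.HasAntidiagonal.mem_antidiagonal, Finset.Nat.mem_antidiagonalTuple] at hx
    have h1 : (Fin.cons (α := fun _ => ℕ) a s) 0 = a := rfl
    have h2 : Fin.tail (Fin.cons (α := fun _ => ℕ) a s) = s := Fin.tail_cons (α := fun _ => ℕ) a s
    refine Sigma.ext ?_ (heq_of_eq ?_)
    · simp only [h1, h2]
      exact Prod.ext rfl (by simp [Fin.cons_succ, hx.2])
    · exact h2
  · intro t _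
    rw [Fin.cons_self_tail t]

theorem chi_zero_zero : chi 0 0 = 1 := by
  simp [chi]

theorem chi_succ_zero (n : ℕ) : chi (n+1) 0 = 0 := by
  simp [chi]

theorem chi_succ_succ (n k : ℕ) (hk : k ≤ n) :
    chi (n+1) (k+1) = ∑ i ∈ Finset.range (n+1-k), catalan i * chi (n-i) k := by
  have h1 : (n+1) - (k+1) = n - k := by omega
  rw [chi, h1, sum_adT_succ k (n-k) (fun t => ∏ j, catalan (t j))]
  have h2 : ∀ p ∈ Finset.HasAntidiagonal.antidiagonal (n-k),
      (∑ s ∈ Finset.Nat.antidiagonalTuple k p.2, ∏ j, catalan ((Fin.cons (α := fun _ => ℕ) p.1 s) j))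
        = catalan p.1 * chi (n - p.1) k := by
    intro p hp
    rw [Finset.HasAntidiagonal.mem_antidiagonal] at hp
    have h3 : (n - p.1) - k = p.2 := by omega
    rw [chi, h3, Finset.mul_sum]
    apply Finset.sum_congr rfl
    intro s _
    rw [Fin.prod_univ_succ]
    simp [Fin.cons_succ]
  rw [Finset.sum_congr rfl h2,
    Finset.Nat.sum_antidiagonal_eq_sum_range_succ (fun i j => catalan i * chi (n-i) k) (n-k)]
  have h4 : (n - k).succ = n + 1 - k := by omega
  rw [h4]

namespace TLDiagram
variable {n : ℕ}
/-- The number of TL diagrams with `k` exposed arcs. -/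
noncomputable def Nk (n k : ℕ) : ℕ := Nat.card {D : TLDiagram n // exposedCount D = k}

theorem Nk_of_gt {k : ℕ} (hk : n < k) : Nk n k = 0 := by
  haveI : IsEmpty {D : TLDiagram n // exposedCount D = k} :=
    ⟨fun ⟨D, hD⟩ => absurd (hD ▸ D.exposedCount_le) (by omega)⟩
  exact Nat.card_of_isEmpty

theorem Nk_zero_zero : Nk 0 0 = 1 := by
  haveI : Nonempty {D : TLDiagram 0 // exposedCount D = 0} :=
    ⟨⟨emptyTL, exposedCount_zero _⟩⟩
  exact Nat.card_unique

theorem Nk_succ_zero : Nk (n+1) 0 = 0 := by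
  haveI : IsEmpty {D : TLDiagram (n+1) // exposedCount D = 0} :=
    ⟨fun ⟨D, hD⟩ => by have := D.one_le_exposedCount (by omega); omega⟩
  exact Nat.card_of_isEmpty

/-- The glue map restricted to fixed exposed count. -/
noncomputable def glueSigE (k : ℕ)
    (x : Σ m : Fin (n+1), TLDiagram m.val × {D : TLDiagram (n - m.val) // exposedCount D = k}) :
    {D : TLDiagram (n+1) // exposedCount D = k+1} :=
  ⟨glueSig ⟨x.1, x.2.1, x.2.2.1⟩, by
    show exposedCount (glue _ _ _) = k + 1
    rw [exposedCount_glue]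
    rw [x.2.2.2]⟩

theorem glueSigE_inj (k : ℕ) : Function.Injective (glueSigE (n := n) k) := by
  rintro ⟨⟨m₁, hm₁⟩, p₁, q₁, hq₁⟩ ⟨⟨m₂, hm₂⟩, p₂, q₂, hq₂⟩ h
  have h2 := glueSig_inj (Subtype.ext_iff.mp h)
  obtain ⟨h3, h4⟩ := Sigma.mk.inj_iff.mp h2
  obtain ⟨hm⟩ : m₁ = m₂ := by injection h3 with h5
  cases (Fin.ext (show m₁ = m₁ from rfl) : (⟨m₁, hm₁⟩ : Fin (n+1)) = ⟨m₁, hm₂⟩)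
  obtain ⟨hp, hq⟩ := Prod.mk_inj.mp (eq_of_heq h4)
  subst hp
  subst hq
  rfl

theorem glueSigE_surj (k : ℕ) : Function.Surjective (glueSigE (n := n) k) := by
  rintro ⟨D, hD⟩
  obtain ⟨⟨m, p, q⟩, rfl⟩ := glueSig_surj D
  have he : exposedCount (glueSig ⟨m, p, q⟩) = exposedCount q + 1 :=
    exposedCount_glue _ p q
  refine ⟨⟨m, p, ⟨q, by omega⟩⟩, Subtype.ext rfl⟩

theorem Nk_succ_succ (k : ℕ) :
    Nk (n+1) (k+1) = ∑ i : Fin (n+1), catalan i.val * Nk (n - i.val) k := by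
  rw [Nk, ← Nat.card_eq_of_bijective (glueSigE k) ⟨glueSigE_inj k, glueSigE_surj k⟩,
    nat_card_sigma]
  apply Finset.sum_congr rfl
  intro i _
  rw [Nat.card_prod, card_TL, Nk]

theorem Nk_eq_chi : ∀ n k, k ≤ n → Nk n k = chi n k := by
  intro n
  induction n using Nat.strong_induction_on with
  | _ n ih =>
    match n with
    | 0 =>
      intro k hk
      interval_cases k
      exact Nk_zero_zero.trans chi_zero_zero.symm
    | (n+1) =>
      intro k hk
      match k with
      | 0 => rw [Nk_succ_zero, chi_succ_zero]
      | (k+1) =>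
        have hk' : k ≤ n := by omega
        rw [Nk_succ_succ, chi_succ_succ n k hk']
        rw [Fin.sum_univ_eq_sum_range (fun i => catalan i * Nk (n - i) (k))]
        rw [← Finset.sum_subset (Finset.range_subset_range.mpr (show n+1-k ≤ n+1 by omega))]
        · apply Finset.sum_congr rfl
          intro i hi
          rw [Finset.mem_range] at hi
          rw [ih (n - i) (by omega) k (by omega)]
        · intro i hmem hi
          rw [Finset.mem_range] at hmem hi
          rw [Nk_of_gt (by omega)]
          simp

end TLDiagram


section Assembly

theorem nat_card_sigma' {ι : Type*} [Fintype ι] (β : ι → Type*) [∀ i, Finite (β i)] :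
    Nat.card (Σ i, β i) = ∑ i, Nat.card (β i) := by
  letI : ∀ i, Fintype (β i) := fun i => Fintype.ofFinite _
  rw [Nat.card_eq_fintype_card, Fintype.card_sigma]
  exact Finset.sum_congr rfl fun i _ => (Nat.card_eq_fintype_card).symm

theorem nat_card_subtype {α : Type*} [Fintype α] (p : α → Prop) [DecidablePred p] :
    Nat.card {x // p x} = (univ.filter p).card := by
  rw [Nat.card_eq_fintype_card, Fintype.card_subtype]

theorem card_zeroOutside {α M : Type*} [Fintype α] [DecidableEq α] [Finite M] [Zero M]
    (P : α → Prop) [DecidablePred P] :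
    Nat.card {g : α → M // ∀ a, P a → g a = 0}
      = Nat.card M ^ (univ.filter (fun a => ¬ P a)).card := by
  have e : {g : α → M // ∀ a, P a → g a = 0} ≃ ((univ.filter (fun a => ¬ P a)) → M) :=
    { toFun := fun g x => g.1 x.1
      invFun := fun h => ⟨fun a => if ha : a ∈ univ.filter (fun a => ¬ P a) then h ⟨a, ha⟩ else 0,
        by
          intro a hPa
          dsimp only
          rw [dif_neg]
          simp [hPa]⟩
      left_inv := fun g => by
        apply Subtype.ext
        funext a
        dsimp only
        by_cases hPa : P a
        · rw [dif_neg (by simp [hPa]), (g.2 a hPa)]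
        · rw [dif_pos (by simp [hPa])]
      right_inv := fun h => by
        funext x
        dsimp only
        rw [dif_pos x.2] }
  rw [Nat.card_congr e, Nat.card_fun]
  congr 1
  rw [Nat.card_eq_fintype_card, Fintype.card_coe]

theorem powerset_sum {α : Type*} [DecidableEq α] (E : Finset α) {n d : ℕ} (hn : E.card ≤ n) :
    ∑ s ∈ E.powerset, d^(n - s.card) = d^(n - E.card) * (1+d)^E.card := by
  have h1 : ∀ s ∈ E.powerset, d^(n - s.card) = d^(n - E.card) * d^(E.card - s.card) := by
    intro s hs
    rw [← pow_add]
    congr 1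
    have := Finset.card_le_card (Finset.mem_powerset.mp hs)
    omega
  rw [Finset.sum_congr rfl h1, ← Finset.mul_sum]
  congr 1
  have h2 := Finset.prod_add (fun _ : α => (1:ℕ)) (fun _ => d) E
  rw [Finset.prod_const] at h2
  rw [h2]
  apply Finset.sum_congr rfl
  intro s hs
  rw [Finset.prod_const, Finset.prod_const, one_pow, one_mul,
    Finset.card_sdiff_of_subset (Finset.mem_powerset.mp hs)]

variable (d n : ℕ)

abbrev BlobT (D : TLDiagram n) := {b : Fin (2*n) → Bool // ∀ a, b a = true → D.IsExposed a}

abbrev BeadsT (D : TLDiagram n) (b : Fin (2*n) → Bool) :=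
  {g : Fin (2*n) → ZMod d // ∀ a, ¬D.IsArc a ∨ b a = true → g a = 0}

def hookEquiv : AbacusHookDiagram d n ≃
    (Σ D : TLDiagram n, Σ b : BlobT n D, BeadsT d n D b.1) × ZMod d where
  toFun x := (⟨x.base, ⟨x.blob, x.blob_exposed⟩, ⟨x.beads, x.beads_arc⟩⟩, x.hookBeads)
  invFun y := ⟨y.1.1, y.1.2.1.1, y.1.2.1.2, y.1.2.2.1, y.1.2.2.2, y.2⟩
  left_inv x := rfl
  right_inv y := rfl

end Assembly


/-- the cardinality of the abacus hook monoid `ℌ_{d,n}` is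
`d^{n+1} ⬝ Σ_{k=1}^{n} χ_k^{(n)} d^{-k} (1+d)^k
  = d ⬝ Σ_{k=1}^{n} χ_k^{(n)} d^{n-k} (1+d)^k`. -/
theorem stmt18 (d n : ℕ) (hd : 1 ≤ d) (hn : 1 ≤ n) :
    Nat.card (AbacusHookDiagram d n) =
      d * ∑ k ∈ Finset.Icc 1 n, chi n k * d ^ (n - k) * (1 + d) ^ k := by
  classical
  haveI : NeZero d := ⟨by omega⟩
  letI : Fintype (TLDiagram n) := Fintype.ofFinite _
  letI : ∀ D : TLDiagram n, Fintype (BlobT n D) := fun D => Fintype.ofFinite _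
  rw [Nat.card_congr (hookEquiv d n), Nat.card_prod, Nat.card_zmod,
    nat_card_sigma']
  -- compute the inner cardinality for each D
  have hD : ∀ D : TLDiagram n,
      Nat.card (Σ b : BlobT n D, BeadsT d n D b.1)
        = d ^ (n - exposedCount D) * (1+d) ^ (exposedCount D) := by
    intro D
    rw [nat_card_sigma']
    have hb : ∀ b : BlobT n D,
        Nat.card (BeadsT d n D b.1)
          = d ^ (n - (univ.filter (fun a => b.1 a = true)).card) := by
      intro b
      rw [show BeadsT d n D b.1 =
        {g : Fin (2*n) → ZMod d // ∀ a, (¬D.IsArc a ∨ b.1 a = true) → g a = 0} from rfl]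
      rw [card_zeroOutside (fun a => ¬D.IsArc a ∨ b.1 a = true), Nat.card_zmod]
      congr 1
      have hset : univ.filter (fun a => ¬(¬D.IsArc a ∨ b.1 a = true))
          = D.arcsF \ univ.filter (fun a => b.1 a = true) := by
        ext a
        simp only [Finset.mem_filter, Finset.mem_sdiff, Finset.mem_univ, true_and,
          TLDiagram.mem_arcsF]
        tauto
      rw [hset, Finset.card_sdiff_of_subset, D.card_arcsF]
      intro a ha
      rw [Finset.mem_filter] at ha
      rw [TLDiagram.mem_arcsF]
      exact (b.2 a ha.2).1
    rw [Finset.sum_congr rfl (fun b _ => hb b)]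
    -- reindex over the powerset of the exposed set
    have hre : ∑ b : BlobT n D, d ^ (n - (univ.filter (fun a => b.1 a = true)).card)
        = ∑ s ∈ (D.expF).powerset, d ^ (n - s.card) := by
      apply Finset.sum_nbij' (i := fun b => univ.filter (fun a => b.1 a = true))
        (j := fun s => (⟨fun a => decide (a ∈ s ∩ D.expF), by
          intro a ha
          rw [decide_eq_true_eq, Finset.mem_inter] at ha
          exact D.mem_expF.mp ha.2⟩ : BlobT n D))
      · intro b _
        rw [Finset.mem_powerset]
        intro a ha
        rw [Finset.mem_filter] at ha
        rw [TLDiagram.mem_expF]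
        exact b.2 a ha.2
      · intro s _
        exact Finset.mem_univ _
      · intro b _
        apply Subtype.ext
        funext a
        dsimp only
        by_cases h : b.1 a = true
        · rw [h, decide_eq_true_eq]
          rw [Finset.mem_inter, Finset.mem_filter]
          exact ⟨⟨Finset.mem_univ _, h⟩, D.mem_expF.mpr (b.2 a h)⟩
        · rw [Bool.not_eq_true] at h
          rw [h]
          rw [decide_eq_false_iff_not, Finset.mem_inter, Finset.mem_filter]
          intro hcon
          rw [h] at hcon
          simp at hcon
      · intro s hs
        rw [Finset.mem_powerset] at hs
        ext a
        simp only [Finset.mem_filter, Finset.mem_univ, true_and, decide_eq_true_eq,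
          Finset.mem_inter]
        constructor
        · exact fun h => h.1
        · exact fun h => ⟨h, hs h⟩
      · intro b _
        rfl
    rw [hre, powerset_sum _ (le_trans (Finset.card_le_card D.expF_subset_arcsF)
        (le_of_eq D.card_arcsF)), ← D.exposedCount_eq]
  rw [Finset.sum_congr rfl (fun D _ => hD D)]
  -- fiber the sum over the exposed count
  rw [← Finset.sum_fiberwise_of_maps_to (g := fun D : TLDiagram n => exposedCount D)
    (t := Finset.Icc 1 n)
    (fun D _ => Finset.mem_Icc.mpr ⟨D.one_le_exposedCount hn, D.exposedCount_le⟩)]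
  rw [mul_comm]
  congr 1
  apply Finset.sum_congr rfl
  intro k hk
  rw [Finset.mem_Icc] at hk
  have hfib : ∀ D ∈ univ.filter (fun D : TLDiagram n => exposedCount D = k),
      d ^ (n - exposedCount D) * (1+d) ^ (exposedCount D)
        = d ^ (n - k) * (1+d) ^ k := by
    intro D hD2
    rw [Finset.mem_filter] at hD2
    rw [hD2.2]
  rw [Finset.sum_congr rfl hfib, Finset.sum_const, smul_eq_mul]
  have hcard : (univ.filter (fun D : TLDiagram n => exposedCount D = k)).card = chi n k := by
    rw [← nat_card_subtype, ← TLDiagram.Nk, TLDiagram.Nk_eq_chi n k hk.2]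
  rw [hcard, mul_assoc]
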